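/- Let G be a graph with n vertices and m ≥ 1 edges. Let A be the adjacency matrix of the Q-complemented graph of G, i.e., the block matrix [[0_{n×n}, B(G)],[B(G)ᵀ, J_m − I_m − A(𝓛(G))]]. Then for every real x with x ≠ 1 such that the matrix ((x²+x−2)/(1−x))·I_m − A(𝓛(G)) is invertible, det(x·I_{n+m} − A) = (−1)^n·(x−1)^m·( 1 − (x/(1−x))·χ_{𝓛(G)}((x²+x−2)/(1−x)) )·𝒬_G(−x). -/

import Mathlib

open Matrix SimpleGraph

/-- The vertex–edge incidence matrix of a graph, relative to an enumeration
`e` of its edges. -/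
noncomputable def incMat {V : Type} [Fintype V] [DecidableEq V] {m : ℕ}
    (G : SimpleGraph V) [Fintype G.edgeSet] (e : Fin m ≃ G.edgeFinset) :
    Matrix V (Fin m) ℝ :=
  Matrix.of fun i j => if i ∈ (e j : Sym2 V) then (1 : ℝ) else 0

/-- The coronal of a matrix: $\chi_M(y)=\mathbb 1^T (yI-M)^{-1}\mathbb 1$,
i.e. the sum of all entries of $(yI-M)^{-1}$. -/
noncomputable def coronal {k : ℕ} (M : Matrix (Fin k) (Fin k) ℝ) (y : ℝ) : ℝ :=
  ∑ i : Fin k, ∑ j : Fin k, ((y • (1 : Matrix (Fin k) (Fin k) ℝ) - M)⁻¹) i j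

namespace S13

variable {n m : ℕ}

noncomputable def Jm (m : ℕ) : Matrix (Fin m) (Fin m) ℝ := Matrix.of fun _ _ => (1:ℝ)

lemma det_sub_smul_J (N : Matrix (Fin m) (Fin m) ℝ) (hN : IsUnit N.det) (c : ℝ) :
    (N - c • Jm m).det = N.det * (1 - c * ∑ i, ∑ j, N⁻¹ i j) := by
  have h : N - c • Jm m
      = N + Matrix.replicateCol Unit (fun _ => -c) * Matrix.replicateRow Unit (fun _ => (1:ℝ)) := by
    ext i j
    simp [Jm, Matrix.mul_apply, sub_eq_add_neg]
  rw [h, Matrix.det_add_replicateCol_mul_replicateRow hN]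
  congr 1
  rw [Matrix.det_unique]
  simp only [Matrix.add_apply, Matrix.one_apply_eq, Matrix.mul_apply, Matrix.replicateRow_apply,
    Matrix.replicateCol_apply, Finset.univ_unique]
  show 1 + ∑ j, (∑ i, 1 * N⁻¹ i j) * -c = 1 - c * ∑ i, ∑ j, N⁻¹ i j
  have := Finset.sum_comm (s := (Finset.univ : Finset (Fin m))) (t := Finset.univ)
    (f := fun i j => N⁻¹ i j)
  simp only [one_mul, ← Finset.sum_mul]
  rw [this]; ring


lemma key_rewrite (B : Matrix (Fin n) (Fin m) ℝ) (x : ℝ) (hx : x ≠ 1) :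
    ((x ^ 2 + x - 2) / (1 - x)) • (1 : Matrix (Fin m) (Fin m) ℝ) - (Bᵀ * B - (2:ℝ) • 1)
      = -(x • 1 + Bᵀ * B) := by
  have h1 : (1:ℝ) - x ≠ 0 := by intro h; apply hx; linarith
  have h2 : (x ^ 2 + x - 2) / (1 - x) = -(x+2) := by field_simp; ring
  rw [h2]
  module

lemma isUnit_N (B : Matrix (Fin n) (Fin m) ℝ) (x : ℝ) (hx : x ≠ 1)
    (hinv : IsUnit (((x ^ 2 + x - 2) / (1 - x)) • (1 : Matrix (Fin m) (Fin m) ℝ) -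
      (Bᵀ * B - (2:ℝ) • 1))) :
    IsUnit (x • 1 + Bᵀ * B).det := by
  rw [key_rewrite B x hx] at hinv
  rw [Matrix.isUnit_iff_isUnit_det, Matrix.det_neg, isUnit_iff_ne_zero] at hinv
  rw [isUnit_iff_ne_zero]
  intro h
  rw [h, mul_zero] at hinv
  exact hinv rfl

lemma coronal_eq (B : Matrix (Fin n) (Fin m) ℝ) (x : ℝ) (hx : x ≠ 1)
    (hinv : IsUnit (((x ^ 2 + x - 2) / (1 - x)) • (1 : Matrix (Fin m) (Fin m) ℝ) -
      (Bᵀ * B - (2:ℝ) • 1))) :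
    _root_.coronal (Bᵀ * B - (2:ℝ) • 1) ((x ^ 2 + x - 2) / (1 - x))
      = - ∑ i : Fin m, ∑ j : Fin m, (x • (1 : Matrix (Fin m) (Fin m) ℝ) + Bᵀ * B)⁻¹ i j := by
  have hN := isUnit_N B x hx hinv
  have hNU : IsUnit (x • (1:Matrix (Fin m) (Fin m) ℝ) + Bᵀ * B) :=
    (Matrix.isUnit_iff_isUnit_det _).2 hN
  have hneg : (-(x • (1:Matrix (Fin m) (Fin m) ℝ) + Bᵀ * B))⁻¹
      = -((x • 1 + Bᵀ * B)⁻¹) := by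
    apply Matrix.inv_eq_right_inv
    rw [Matrix.neg_mul, Matrix.mul_neg, neg_neg, Matrix.mul_nonsing_inv _ hN]
  unfold _root_.coronal
  rw [key_rewrite B x hx, hneg]
  simp [Finset.sum_neg_distrib]

lemma schur (B : Matrix (Fin n) (Fin m) ℝ) (x : ℝ) (hx0 : x ≠ 0) :
    (fromBlocks (x • (1:Matrix (Fin n) (Fin n) ℝ)) (-B) (-Bᵀ)
      ((x-1) • 1 + Bᵀ*B - Jm m)).det
    = x ^ n * (x⁻¹) ^ m * ((x-1) • (x • 1 + Bᵀ*B) - x • Jm m).det := by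
  haveI : Invertible (x • (1:Matrix (Fin n) (Fin n) ℝ)) :=
    ⟨x⁻¹ • 1, by rw [smul_mul_smul_comm, inv_mul_cancel₀ hx0, Matrix.one_mul, one_smul],
      by rw [smul_mul_smul_comm, mul_inv_cancel₀ hx0, Matrix.one_mul, one_smul]⟩
  rw [Matrix.det_fromBlocks₁₁]
  have h1 : ⅟(x • (1:Matrix (Fin n) (Fin n) ℝ)) = x⁻¹ • 1 :=
    invOf_eq_right_inv
      (by rw [smul_mul_smul_comm, mul_inv_cancel₀ hx0, Matrix.one_mul, one_smul])
  rw [h1]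
  have h2 : ((x-1) • 1 + Bᵀ*B - Jm m) - (-Bᵀ) * (x⁻¹ • (1:Matrix (Fin n) (Fin n) ℝ)) * (-B)
      = x⁻¹ • ((x-1) • (x • 1 + Bᵀ*B) - x • Jm m) := by
    have : (-Bᵀ) * (x⁻¹ • (1:Matrix (Fin n) (Fin n) ℝ)) * (-B) = x⁻¹ • (Bᵀ * B) := by
      rw [Matrix.mul_smul, Matrix.mul_one, Matrix.smul_mul, Matrix.neg_mul, Matrix.mul_neg,
        neg_neg]
    rw [this]
    match_scalars <;> field_simp <;> ring
  rw [h2, Matrix.det_smul, Matrix.det_smul, Matrix.det_one, Fintype.card_fin, Fintype.card_fin,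
    mul_one, mul_assoc]

lemma wein (B : Matrix (Fin n) (Fin m) ℝ) (x : ℝ) (hx0 : x ≠ 0) :
    (x • 1 + Bᵀ * B).det = x ^ m * (x⁻¹) ^ n * (x • (1:Matrix (Fin n) (Fin n) ℝ) + B * Bᵀ).det := by
  have e1 : x • (1:Matrix (Fin m) (Fin m) ℝ) + Bᵀ*B = x • (1 + x⁻¹ • (Bᵀ * B)) := by
    match_scalars <;> field_simp
  have e2 : (1:Matrix (Fin m) (Fin m) ℝ) + x⁻¹ • (Bᵀ * B) = 1 + (x⁻¹ • Bᵀ) * B := by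
    rw [Matrix.smul_mul]
  have e3 : (1:Matrix (Fin n) (Fin n) ℝ) + B * (x⁻¹ • Bᵀ) = x⁻¹ • (x • 1 + B * Bᵀ) := by
    rw [Matrix.mul_smul]
    match_scalars <;> field_simp
  rw [e1, Matrix.det_smul, e2, Matrix.det_one_add_mul_comm, e3, Matrix.det_smul,
    Fintype.card_fin, Fintype.card_fin]
  ring


lemma block_rw (B : Matrix (Fin n) (Fin m) ℝ) (x : ℝ) :
    x • (1 : Matrix (Fin n ⊕ Fin m) (Fin n ⊕ Fin m) ℝ) -
        Matrix.fromBlocks 0 B Bᵀ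
          (Matrix.of (fun _ _ => (1 : ℝ)) - 1 - (Bᵀ * B - (2 : ℝ) • 1))
      = fromBlocks (x • 1) (-B) (-Bᵀ) ((x-1) • 1 + Bᵀ*B - Jm m) := by
  rw [← Matrix.fromBlocks_one, Matrix.fromBlocks_smul, sub_eq_add_neg, Matrix.fromBlocks_neg,
    Matrix.fromBlocks_add, Matrix.fromBlocks_inj]
  refine ⟨by simp, by simp, by simp, ?_⟩
  show x • 1 + -(Matrix.of (fun _ _ => (1:ℝ)) - 1 - (Bᵀ * B - (2:ℝ) • 1)) = _
  have : Jm m = Matrix.of (fun _ _ => (1:ℝ)) := rfl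
  rw [this]
  module

lemma m_le_n (B : Matrix (Fin n) (Fin m) ℝ) (hU : IsUnit (Bᵀ * B)) : m ≤ n := by
  have h1 : (Bᵀ * B).rank = m := by rw [Matrix.rank_of_isUnit _ hU, Fintype.card_fin]
  have h2 : (Bᵀ * B).rank ≤ n := le_trans (Matrix.rank_mul_le_left _ _)
    (by simpa using Matrix.rank_le_card_width Bᵀ)
  omega

lemma det_BBt_zero (B : Matrix (Fin n) (Fin m) ℝ) (hmn : m < n) : (B * Bᵀ).det = 0 := by
  by_contra h
  have hU : IsUnit (B * Bᵀ) := (Matrix.isUnit_iff_isUnit_det _).2 (isUnit_iff_ne_zero.2 h)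
  have h1 : (B * Bᵀ).rank = n := by rw [Matrix.rank_of_isUnit _ hU, Fintype.card_fin]
  have h2 : (B * Bᵀ).rank ≤ m := le_trans (Matrix.rank_mul_le_left _ _)
    (by simpa using Matrix.rank_le_card_width B)
  omega

lemma det_tmul_eq (B : Matrix (Fin n) (Fin m) ℝ) (h : m = n) : (Bᵀ * B).det = (B * Bᵀ).det := by
  subst h
  rw [Matrix.det_mul, Matrix.det_mul, Matrix.det_transpose, mul_comm]

lemma zero_case (B : Matrix (Fin n) (Fin m) ℝ)
    (hU : IsUnit ((0:ℝ) • (1 : Matrix (Fin m) (Fin m) ℝ) + Bᵀ * B).det) :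
    (fromBlocks ((0:ℝ) • (1:Matrix (Fin n) (Fin n) ℝ)) (-B) (-Bᵀ)
      (((0:ℝ)-1) • 1 + Bᵀ*B - Jm m)).det
    = (-1:ℝ)^m * (B * Bᵀ).det := by
  have hU' : IsUnit (Bᵀ * B) := by
    rw [Matrix.isUnit_iff_isUnit_det]
    simpa using hU
  have hmn : m ≤ n := m_le_n B hU'
  set F : ℝ → ℝ := fun t => (fromBlocks (t • (1:Matrix (Fin n) (Fin n) ℝ)) (-B) (-Bᵀ)
      ((t-1) • 1 + Bᵀ*B - Jm m)).det with hFdef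
  set G : ℝ → ℝ := fun t =>
    t^(n-m) * ((t-1) • (t • (1:Matrix (Fin m) (Fin m) ℝ) + Bᵀ*B) - t • Jm m).det with hGdef
  have hF : Continuous F := by
    apply Continuous.matrix_det
    apply continuous_matrix
    rintro (i|i) (j|j) <;>
      simp only [Matrix.fromBlocks_apply₁₁, Matrix.fromBlocks_apply₁₂, Matrix.fromBlocks_apply₂₁,
        Matrix.fromBlocks_apply₂₂, Matrix.sub_apply, Matrix.add_apply, Matrix.smul_apply,
        smul_eq_mul] <;> fun_prop
  have hG : Continuous G := by
    apply Continuous.mul (by fun_prop)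
    apply Continuous.matrix_det
    apply continuous_matrix
    intro i j
    simp only [Matrix.sub_apply, Matrix.add_apply, Matrix.smul_apply, smul_eq_mul]
    fun_prop
  have heq : F = G := by
    apply Continuous.ext_on (dense_compl_singleton (0:ℝ)) hF hG
    intro t ht
    have ht0 : t ≠ 0 := ht
    show F t = G t
    rw [hFdef, hGdef]
    simp only
    rw [schur B t ht0, pow_sub₀ t ht0 hmn, ← inv_pow]
  have h0 : F 0 = G 0 := by rw [heq]
  rw [hFdef] at h0
  simp only at h0
  rw [h0, hGdef]
  simp only
  have e : ((0:ℝ)-1) • ((0:ℝ) • (1:Matrix (Fin m) (Fin m) ℝ) + Bᵀ*B) - (0:ℝ) • Jm m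
      = -(Bᵀ * B) := by module
  rw [e]
  rw [Matrix.det_neg, Fintype.card_fin]
  rcases lt_or_eq_of_le hmn with hlt | heq'
  · rw [det_BBt_zero B hlt, zero_pow (by omega)]
    ring
  · rw [det_tmul_eq B heq', show n - m = 0 by omega, pow_zero, one_mul]

theorem main (B : Matrix (Fin n) (Fin m) ℝ) (x : ℝ) (hx : x ≠ 1)
    (hinv : IsUnit (((x ^ 2 + x - 2) / (1 - x)) • (1 : Matrix (Fin m) (Fin m) ℝ) -
      (Bᵀ * B - (2 : ℝ) • 1))) :
    (x • (1 : Matrix (Fin n ⊕ Fin m) (Fin n ⊕ Fin m) ℝ) -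
        Matrix.fromBlocks 0 B Bᵀ
          (Matrix.of (fun _ _ => (1 : ℝ)) - 1 - (Bᵀ * B - (2 : ℝ) • 1))).det
      = (-1 : ℝ) ^ n * (x - 1) ^ m *
          (1 - (x / (1 - x)) *
            coronal (Bᵀ * B - (2 : ℝ) • 1) ((x ^ 2 + x - 2) / (1 - x))) *
          ((-x) • (1 : Matrix (Fin n) (Fin n) ℝ) - B * Bᵀ).det := by
  have hN := isUnit_N B x hx hinv
  rw [block_rw, coronal_eq B x hx hinv]
  by_cases hx0 : x = 0
  · subst hx0
    rw [zero_case B hN]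
    have e2 : ((-(0:ℝ)) • (1:Matrix (Fin n) (Fin n) ℝ) - B * Bᵀ) = -(B * Bᵀ) := by module
    rw [e2, Matrix.det_neg, Fintype.card_fin]
    have hsq : ((-1:ℝ))^(n*2) = 1 := Even.neg_one_pow ⟨n, by ring⟩
    field_simp
    ring_nf
    simp only [hsq, mul_one, one_mul]
  · have hx1 : x - 1 ≠ 0 := sub_ne_zero.2 hx
    rw [schur B x hx0]
    have e : (x-1) • (x • (1:Matrix (Fin m) (Fin m) ℝ) + Bᵀ*B) - x • Jm m
        = (x-1) • ((x • 1 + Bᵀ*B) - (x/(x-1)) • Jm m) := by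
      match_scalars <;> (field_simp; try ring)
    rw [e, Matrix.det_smul, Fintype.card_fin, det_sub_smul_J _ hN, wein B x hx0]
    have e2 : ((-x) • (1:Matrix (Fin n) (Fin n) ℝ) - B * Bᵀ) = (-1:ℝ) • (x • 1 + B * Bᵀ) := by
      match_scalars <;> ring
    rw [e2, Matrix.det_smul, Fintype.card_fin]
    have h1x : (1:ℝ) - x ≠ 0 := fun h => hx (by linarith)
    have hsq : ((-1:ℝ))^(n*2) = 1 := Even.neg_one_pow ⟨n, by ring⟩
    field_simp
    ring_nf
    simp only [hsq, mul_one, one_mul]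
    rw [inv_pow, inv_pow]
    field_simp
    ring

end S13

/-- `A`-characteristic polynomial of the Q-complemented graph
of `G`, at points `x` where the relevant matrix is invertible.  Here
$A(\mathcal L(G)) = B^TB-2I$ and $Q(G)=BB^T$. -/
theorem stmt_13 (n m : ℕ) (hm : 1 ≤ m)
    (G : SimpleGraph (Fin n)) [DecidableRel G.Adj] [Fintype G.edgeSet]
    (e : Fin m ≃ G.edgeFinset)
    (x : ℝ) (hx : x ≠ 1)
    (hinv : IsUnit (((x ^ 2 + x - 2) / (1 - x)) • (1 : Matrix (Fin m) (Fin m) ℝ) -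
      ((incMat G e)ᵀ * incMat G e - (2 : ℝ) • 1))) :
    (x • (1 : Matrix (Fin n ⊕ Fin m) (Fin n ⊕ Fin m) ℝ) -
        Matrix.fromBlocks 0 (incMat G e) (incMat G e)ᵀ
          (Matrix.of (fun _ _ => (1 : ℝ)) - 1 -
            ((incMat G e)ᵀ * incMat G e - (2 : ℝ) • 1))).det
      = (-1 : ℝ) ^ n * (x - 1) ^ m *
          (1 - (x / (1 - x)) *
            coronal ((incMat G e)ᵀ * incMat G e - (2 : ℝ) • 1)
              ((x ^ 2 + x - 2) / (1 - x))) *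
          ((-x) • (1 : Matrix (Fin n) (Fin n) ℝ) - incMat G e * (incMat G e)ᵀ).det :=
  S13.main (incMat G e) x hx hinv
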